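/- The SAND update dynamics on a finite graph terminate: starting from any configuration, the process where (i) a sensor with no router in its closed neighborhood becomes a router, and (ii) a router adjacent to another router with strictly smaller timestamp (timestamps fixed and injective) becomes a sensor, applied fairly, reaches a fixed point in finitely many steps. -/
import Mathlib


def Indep {V : Type*} (G : SimpleGraph V) (S : Set V) : Prop :=
  ∀ u ∈ S, ∀ v ∈ S, ¬ G.Adj u v

def Dominating {V : Type*} (G : SimpleGraph V) (S : Set V) : Prop :=
  ∀ v : V, v ∈ S ∨ ∃ u ∈ S, G.Adj v u

section

variable {V : Type*} (G : SimpleGraph V) (ts : V → ℕ)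

/-- Rule (i): a sensor with no router in its closed neighborhood may become a router. -/
def RouterEnabled (c : V → Bool) (v : V) : Prop :=
  c v = false ∧ ∀ u : V, (u = v ∨ G.Adj v u) → c u = false

/-- Rule (ii): a router adjacent to a router of strictly smaller timestamp
may become a sensor. -/
def SensorEnabled (c : V → Bool) (v : V) : Prop :=
  c v = true ∧ ∃ u : V, G.Adj v u ∧ c u = true ∧ ts u < ts v

def Enabled (c : V → Bool) (v : V) : Prop :=
  RouterEnabled G c v ∨ SensorEnabled G ts c v

/-- One step of the dynamics flips the state of exactly one enabled vertex. -/
def Step (c c' : V → Bool) : Prop :=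
  ∃ v : V, Enabled G ts c v ∧ c' v = ! c v ∧ ∀ u : V, u ≠ v → c' u = c u

theorem sand_dynamics_terminate {V : Type*} [Fintype V]
    (G : SimpleGraph V) (ts : V → ℕ) (hts : Function.Injective ts)
    (c : ℕ → V → Bool)
    (hstep : ∀ n : ℕ,
      Step G ts (c n) (c (n+1)) ∨ (c (n+1) = c n ∧ ∀ v : V, ¬ Enabled G ts (c n) v))
    (hfair : ∀ n : ℕ, ∀ v : V, Enabled G ts (c n) v →
      ∃ m : ℕ, n ≤ m ∧ (c (m+1) v ≠ c m v ∨ ¬ Enabled G ts (c m) v)) :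
    ∃ n : ℕ, ∀ v : V, ¬ Enabled G ts (c n) v := by
  classical
  -- If a vertex flips, it was enabled.
  have flip : ∀ n v, c (n+1) v ≠ c n v → Enabled G ts (c n) v := by
    intro n v h
    rcases hstep n with ⟨w, hw, hflip, hoth⟩ | ⟨heq, _⟩
    · by_cases hvw : v = w
      · subst hvw; exact hw
      · exact absurd (hoth v hvw) h
    · exact absurd (congrFun heq v) h
  -- Every vertex eventually stabilizes (strong induction on timestamp).
  have stab : ∀ n v, ts v = n → ∃ N, ∀ m, N ≤ m → c m v = c N v := by
    intro n
    induction n using Nat.strong_induction_on with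
    | _ n ih =>
      intro v hv
      have IH : ∀ u, ts u < ts v → ∃ N, ∀ m, N ≤ m → c m u = c N u := by
        intro u hu
        exact ih (ts u) (hv ▸ hu) u rfl
      set f : V → ℕ := fun u => if h' : ts u < ts v then (IH u h').choose else 0 with hf
      set N0 := Finset.univ.sup f with hN0
      have hstable : ∀ u, ts u < ts v → ∀ m, N0 ≤ m → c m u = c N0 u := by
        intro u hu m hm
        have hfu : f u ≤ N0 := Finset.le_sup (Finset.mem_univ u)
        have hchoose : f u = (IH u hu).choose := by simp [hf, hu]
        rw [hchoose] at hfu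
        have hspec := (IH u hu).choose_spec
        rw [hspec m (le_trans hfu hm), hspec N0 hfu]
      -- If some value is absorbing after N0, the vertex stabilizes.
      have absorb : ∀ b : Bool, (∀ m, N0 ≤ m → c m v = b → c (m+1) v = b) →
          ∃ N, ∀ m, N ≤ m → c m v = c N v := by
        intro b hb
        by_cases hex : ∃ m, N0 ≤ m ∧ c m v = b
        · obtain ⟨m, hm, hmb⟩ := hex
          refine ⟨m, ?_⟩
          have hall : ∀ k, m ≤ k → c k v = b := by
            intro k hk
            induction k, hk using Nat.le_induction with
            | base => exact hmb
            | succ k hk ihk => exact hb k (le_trans hm hk) ihk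
          intro m' hm'
          rw [hall m' hm', hmb]
        · push_neg at hex
          refine ⟨N0, fun m hm => ?_⟩
          have h1 := hex m hm
          have h2 := hex N0 le_rfl
          revert h1 h2
          cases c m v <;> cases c N0 v <;> cases b <;> simp
      by_cases hcase : ∃ u, G.Adj v u ∧ ts u < ts v ∧ c N0 u = true
      · -- some smaller-timestamp neighbor is stably a router: `false` absorbing
        obtain ⟨u, hadj, htu, hcu⟩ := hcase
        apply absorb false
        intro m hm hfalse
        by_contra hne
        have hne' : c (m+1) v ≠ c m v := by rw [hfalse]; exact hne
        rcases flip m v hne' with hR | hS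
        · have hu := hR.2 u (Or.inr hadj)
          rw [hstable u htu m hm, hcu] at hu
          exact absurd hu (by simp)
        · rw [hS.1] at hfalse
          exact absurd hfalse (by simp)
      · -- no smaller-timestamp neighbor is stably a router: `true` absorbing
        push_neg at hcase
        apply absorb true
        intro m hm htrue
        by_contra hne
        have hne' : c (m+1) v ≠ c m v := by rw [htrue]; exact hne
        rcases flip m v hne' with hR | hS
        · rw [hR.1] at htrue
          exact absurd htrue (by simp)
        · obtain ⟨_, u, hadj, hcu, hlt⟩ := hS
          have hfu := hcase u hadj hlt
          rw [hstable u hlt m hm] at hcu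
          exact absurd hcu hfu
  have stab' : ∀ v : V, ∃ N, ∀ m, N ≤ m → c m v = c N v := fun v => stab (ts v) v rfl
  choose N hN using stab'
  set M := Finset.univ.sup N with hM
  have hconst : ∀ m, M ≤ m → c m = c M := by
    intro m hm
    funext v
    have hv : N v ≤ M := Finset.le_sup (Finset.mem_univ v)
    rw [hN v m (le_trans hv hm), hN v M hv]
  refine ⟨M, fun v hv => ?_⟩
  obtain ⟨m, hm, hflip | hdis⟩ := hfair M v hv
  · apply hflip
    rw [hconst (m+1) (le_trans hm (Nat.le_succ m)), hconst m hm]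
  · rw [hconst m hm] at hdis
    exact hdis hv


end
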